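/- In Minkowski space M = ℝ⁴, the relation 'causally related through horismos' coincides with the chronological order: x ≪ᵁ y if and only if x ≪ y. -/

import Mathlib

open Set Metric TopologicalSpace

noncomputable section

/-- Minkowski space `M = ℝ⁴` with the Euclidean metric/topology. -/
abbrev M4 : Type := EuclideanSpace ℝ (Fin 4)

/-- The Minkowski quadratic form `Q(x) = x₀² − x₁² − x₂² − x₃²`. -/
def Q (x : M4) : ℝ := x 0 ^ 2 - x 1 ^ 2 - x 2 ^ 2 - x 3 ^ 2

/-- Chronological order: `x ≪ y`. -/
def chron (x y : M4) : Prop := Q (y - x) > 0 ∧ x 0 < y 0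

/-- Causal order: `x ≺ y`. -/
def causal (x y : M4) : Prop := Q (y - x) ≥ 0 ∧ x 0 ≤ y 0

/-- Horismos: `x → y`. -/
def horismos (x y : M4) : Prop := Q (y - x) = 0 ∧ x ≠ y ∧ x 0 < y 0

/-- The light cone `N(x) = N⁺(x) ∪ N⁻(x)`. -/
def lightCone (x : M4) : Set M4 := {y | horismos x y} ∪ {y | horismos y x}

/-- The Zeeman topology `Z`, generated by the sets `Z_ε(x) = (B_ε(x) \ N(x)) ∪ {x}`. -/
def Zeeman : TopologicalSpace M4 :=
  TopologicalSpace.generateFrom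
    {S | ∃ (x : M4) (ε : ℝ), 0 < ε ∧ S = (Metric.ball x ε \ lightCone x) ∪ {x}}

/-- The interval topology `T_R` of a relation `R`, generated by the subbasis of
complements of the sets `R⁺(x) = {y | R x y}` and `R⁻(x) = {y | R y x}`. -/
def intervalTopology (R : M4 → M4 → Prop) : TopologicalSpace M4 :=
  TopologicalSpace.generateFrom
    ({S | ∃ x : M4, S = {y | R x y}ᶜ} ∪ {S | ∃ x : M4, S = {y | R y x}ᶜ})
/-- `x ≪ᵁ y` iff `x ≺ᵁ y` and not `x → y`. -/
def chronThroughHorismos (x y : M4) : Prop :=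
  Relation.TransGen horismos x y ∧ ¬ horismos x y


lemma key_add (a0 a1 a2 a3 b0 b1 b2 b3 : ℝ) (ha : a0^2 - a1^2-a2^2-a3^2 ≥ 0)
    (hb : b0^2 - b1^2-b2^2-b3^2 ≥ 0) (ha0 : a0 ≥ 0) (hb0 : b0 ≥ 0) :
    (a0+b0)^2 - (a1+b1)^2 - (a2+b2)^2 - (a3+b3)^2 ≥ 0 := by
  nlinarith [sq_nonneg (a1*b2-a2*b1), sq_nonneg (a1*b3-a3*b1), sq_nonneg (a2*b3-a3*b2),
    mul_nonneg ha0 hb0, sq_nonneg (a0*b0 - a1*b1 - a2*b2 - a3*b3),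
    sq_nonneg (a0*b0 + a1*b1 + a2*b2 + a3*b3)]

lemma transGen_horismos_causal {x y : M4} (h : Relation.TransGen horismos x y) :
    Q (y - x) ≥ 0 ∧ x 0 < y 0 := by
  induction h with
  | single h => exact ⟨le_of_eq h.1.symm, h.2.2⟩
  | tail _ h ih =>
    rename_i b c _
    obtain ⟨hq, hlt⟩ := ih
    obtain ⟨hq2, _, hlt2⟩ := h
    constructor
    · have := key_add (b 0 - x 0) (b 1 - x 1) (b 2 - x 2) (b 3 - x 3)
        (c 0 - b 0) (c 1 - b 1) (c 2 - b 2) (c 3 - b 3)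
        (by simpa [Q, PiLp.sub_apply] using hq)
        (by simpa [Q, PiLp.sub_apply] using le_of_eq hq2.symm)
        (by linarith) (by linarith)
      simp only [Q, PiLp.sub_apply]
      convert this using 2 <;> ring
    · linarith

set_option maxHeartbeats 1000000 in
/-- The relation "causally related through horismos" coincides with chronology. -/
theorem chronThroughHorismos_iff_chron :
    ∀ x y : M4, chronThroughHorismos x y ↔ chron x y := by
  intro x y
  constructor
  · rintro ⟨htg, hnh⟩
    obtain ⟨hq, hlt⟩ := transGen_horismos_causal htg
    refine ⟨lt_of_le_of_ne hq ?_, hlt⟩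
    intro h
    exact hnh ⟨h.symm, fun he => by simp [he] at hlt, hlt⟩
  · rintro ⟨hq, hlt⟩
    have hnh : ¬ horismos x y := fun h => by
      rw [h.1] at hq; exact lt_irrefl 0 hq
    refine ⟨?_, hnh⟩
    set u0 := y 0 - x 0 with hu0
    set u1 := y 1 - x 1 with hu1
    set u2 := y 2 - x 2 with hu2
    set u3 := y 3 - x 3 with hu3
    have hQ : u0^2 - u1^2 - u2^2 - u3^2 > 0 := by
      simpa [Q, PiLp.sub_apply, hu0, hu1, hu2, hu3] using hq
    have hu0pos : 0 < u0 := by rw [hu0]; linarith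
    set s := Real.sqrt (u1^2 + u2^2 + u3^2) with hs
    have hsnn : 0 ≤ s := Real.sqrt_nonneg _
    have hssq : s^2 = u1^2 + u2^2 + u3^2 := Real.sq_sqrt (by positivity)
    have hs_lt : s < u0 := by
      nlinarith [hsnn, hssq]
    set t := (u0 + s) / 2 with ht
    have htpos : 0 < t := by positivity
    have ht_lt : t < u0 := by rw [ht]; linarith
    -- choose spatial direction
    by_cases hszero : s = 0
    · -- u1 = u2 = u3 = 0
      have h1 : u1 = 0 ∧ u2 = 0 ∧ u3 = 0 := by
        have : u1^2 + u2^2 + u3^2 = 0 := by rw [← hssq, hszero]; ring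
        refine ⟨?_, ?_, ?_⟩ <;> nlinarith [sq_nonneg u1, sq_nonneg u2, sq_nonneg u3]
      obtain ⟨z, hzc⟩ : ∃ z : M4, ∀ i, z i = x i + (![t, t, 0, 0] : Fin 4 → ℝ) i :=
        ⟨(WithLp.equiv 2 (Fin 4 → ℝ)).symm (fun i => x i + ![t, t, 0, 0] i), fun i => rfl⟩
      have hxz : horismos x z := by
        refine ⟨?_, ?_, ?_⟩
        · simp [Q, PiLp.sub_apply, hzc]; try ring
        · intro he
          have h0 : x 0 = z 0 := by rw [he]
          rw [hzc 0] at h0; simp at h0; linarith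
        · rw [hzc 0]; simp; linarith
      have hzy : horismos z y := by
        refine ⟨?_, ?_, ?_⟩
        · simp only [Q, PiLp.sub_apply, hzc]
          simp
          have e0 : y 0 = x 0 + u0 := by rw [hu0]; ring
          have e1 : y 1 = x 1 + u1 := by rw [hu1]; ring
          have e2 : y 2 = x 2 + u2 := by rw [hu2]; ring
          have e3 : y 3 = x 3 + u3 := by rw [hu3]; ring
          rw [e0, e1, e2, e3, h1.1, h1.2.1, h1.2.2]
          have hts : t = u0 / 2 := by rw [ht, hszero]; ring
          rw [hts]; ring
        · intro he
          have h0 : z 0 = y 0 := by rw [he]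
          rw [hzc 0] at h0; simp at h0
          have h2 : t < u0 := ht_lt
          rw [hu0] at h2
          linarith
        · rw [hzc 0]; simp
          have : y 0 = x 0 + u0 := by rw [hu0]; ring
          linarith
      exact (Relation.TransGen.single hxz).tail hzy
    · have hspos : 0 < s := lt_of_le_of_ne hsnn (Ne.symm hszero)
      set r := t / s with hr
      obtain ⟨z, hzc⟩ : ∃ z : M4, ∀ i, z i = x i + (![t, r*u1, r*u2, r*u3] : Fin 4 → ℝ) i :=
        ⟨(WithLp.equiv 2 (Fin 4 → ℝ)).symm (fun i => x i + ![t, r*u1, r*u2, r*u3] i), fun i => rfl⟩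
      have hrs : r * s = t := by rw [hr]; field_simp
      have hxz : horismos x z := by
        refine ⟨?_, ?_, ?_⟩
        · simp only [Q, PiLp.sub_apply, hzc]
          simp
          have : t^2 = r^2 * s^2 := by rw [← hrs]; ring
          rw [this, hssq]; ring
        · intro he
          have h0 : x 0 = z 0 := by rw [he]
          rw [hzc 0] at h0; simp at h0; linarith
        · rw [hzc 0]; simp; linarith
      have hzy : horismos z y := by
        refine ⟨?_, ?_, ?_⟩
        · simp only [Q, PiLp.sub_apply, hzc]
          simp
          have e0 : y 0 = x 0 + u0 := by rw [hu0]; ring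
          have e1 : y 1 = x 1 + u1 := by rw [hu1]; ring
          have e2 : y 2 = x 2 + u2 := by rw [hu2]; ring
          have e3 : y 3 = x 3 + u3 := by rw [hu3]; ring
          rw [e0, e1, e2, e3]
          have expand : (x 0 + u0 - (x 0 + t))^2 - (x 1 + u1 - (x 1 + r*u1))^2
              - (x 2 + u2 - (x 2 + r*u2))^2 - (x 3 + u3 - (x 3 + r*u3))^2
              = (u0 - t)^2 - (1-r)^2 * (u1^2 + u2^2 + u3^2) := by ring
          rw [expand, ← hssq]
          have : (1 - r)^2 * s^2 = (s - t)^2 := by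
            have : (1-r)*s = s - t := by rw [mul_comm] at hrs; nlinarith [hrs]
            nlinarith [this]
          rw [this]
          have : u0 - t = -(s - t) := by rw [ht]; ring
          rw [this]; ring
        · intro he
          have h0 : z 0 = y 0 := by rw [he]
          rw [hzc 0] at h0; simp at h0
          have h2 : t < u0 := ht_lt
          rw [hu0] at h2
          linarith
        · rw [hzc 0]; simp
          have : y 0 = x 0 + u0 := by rw [hu0]; ring
          linarith
      exact (Relation.TransGen.single hxz).tail hzy
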